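/- For a standardized DFA ⟨Z_n,{a,b}⟩ with subgroup sequence H_k as defined, if H_ℓ = H_{ℓ+1} ⊊ Z_n for some ℓ, then the DFA is not completely reachable. -/

import Mathlib

/-- Action of a letter: `true` is `b : q ↦ q+1`, `false` is `a`. -/
def act {n : ℕ} (a : ZMod n → ZMod n) (q : ZMod n) (c : Bool) : ZMod n :=
  if c then q + 1 else a q

/-- Action of a word on a state. -/
def wact {n : ℕ} (a : ZMod n → ZMod n) (w : List Bool) (q : ZMod n) : ZMod n :=
  w.foldl (act a) q

/-- Excluded set of a word. -/
def excl {n : ℕ} (a : ZMod n → ZMod n) (w : List Bool) : Set (ZMod n) :=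
  {q | ∀ p, wact a w p ≠ q}

/-- Duplicate set of a word. -/
def dupl {n : ℕ} (a : ZMod n → ZMod n) (w : List Bool) : Set (ZMod n) :=
  {p | ∃ q₁ q₂, q₁ ≠ q₂ ∧ wact a w q₁ = p ∧ wact a w q₂ = p}

/-- Complete reachability for a standardized binary DFA on `ZMod n`. -/
def CompletelyReachable {n : ℕ} (a : ZMod n → ZMod n) : Prop :=
  ∀ S : Set (ZMod n), S.Nonempty → ∃ w : List Bool, Set.range (wact a w) = S

/-- Standardized DFA: `a` has defect 1 with excluded state `0`, and `0·a = dupl(a)`,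
i.e. `a 0` has a second preimage `r ≠ 0`. -/
def Standardized {n : ℕ} (a : ZMod n → ZMod n) : Prop :=
  Set.range a = {(0 : ZMod n)}ᶜ ∧ ∃ r : ZMod n, r ≠ 0 ∧ a r = a 0

/-- Edge of the Rystsov graph: for some word of defect 1, `q` is the excluded state
and `p` the duplicate state. -/
def RysEdge {n : ℕ} (a : ZMod n → ZMod n) (q p : ZMod n) : Prop :=
  ∃ w : List Bool, excl a w = {q} ∧ dupl a w = {p}

/-- The difference set `D₁`. -/
def D1 {n : ℕ} (a : ZMod n → ZMod n) : Set (ZMod n) :=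
  {p | RysEdge a 0 p}

/-- The set `D_k` built from a subgroup `H = H_{k-1}`. -/
def Dnext {n : ℕ} (a : ZMod n → ZMod n) (H : AddSubgroup (ZMod n)) (k : ℕ) : Set (ZMod n) :=
  {p | ∃ w : List Bool, p ∈ dupl a w ∧ (0 : ZMod n) ∈ excl a w ∧
    excl a w ⊆ (H : Set (ZMod n)) ∧ (excl a w).ncard ≤ k}

/-- The subgroup sequence `H_k`. -/
def Hk {n : ℕ} (a : ZMod n → ZMod n) : ℕ → AddSubgroup (ZMod n)
  | 0 => ⊥
  | k + 1 => AddSubgroup.closure (Dnext a (Hk a k) (k + 1))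

section AuxLemmas

variable {n : ℕ} {a : ZMod n → ZMod n}

lemma wact_append_aux (u v : List Bool) (q : ZMod n) :
    wact a (u ++ v) q = wact a v (wact a u q) :=
  List.foldl_append

lemma wact_true_aux (q : ZMod n) : wact a [true] q = q + 1 := by
  simp [wact, act]

lemma wact_false_aux (q : ZMod n) : wact a [false] q = a q := by
  simp [wact, act]

lemma wact_replicate_aux (t : ℕ) (q : ZMod n) :
    wact a (List.replicate t true) q = q + t := by
  induction t generalizing q with
  | zero => simp [wact]
  | succ t ih =>
      rw [List.replicate_succ]
      have h1 : wact a (true :: List.replicate t true) q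
          = wact a (List.replicate t true) (q + 1) := by
        show wact a ([true] ++ List.replicate t true) q = _
        rw [wact_append_aux, wact_true_aux]
      rw [h1, ih]
      push_cast
      ring

lemma wact_shift_aux [NeZero n] (w : List Bool) (t : ZMod n) (q : ZMod n) :
    wact a (w ++ (List.replicate t.val true ++ [false])) q
      = a (wact a w q + t) := by
  rw [wact_append_aux, wact_append_aux, wact_replicate_aux, wact_false_aux,
    ZMod.natCast_rightInverse t]

end AuxLemmas

theorem not_completely_reachable_of_stable_proper {n : ℕ} (hn : 2 ≤ n)
    (a : ZMod n → ZMod n) (hstd : Standardized a) (ℓ : ℕ)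
    (hℓ : Hk a ℓ = Hk a (ℓ + 1)) (hproper : Hk a ℓ ≠ ⊤) :
    ¬ CompletelyReachable a := by
  haveI : NeZero n := ⟨by omega⟩
  obtain ⟨rng, r, hr0, har⟩ := hstd
  -- `a` never takes the value 0
  have ha_ne : ∀ x, a x ≠ 0 := by
    intro x hx
    have : (0 : ZMod n) ∈ Set.range a := ⟨x, hx⟩
    rw [rng] at this
    exact this rfl
  -- every nonzero value is attained
  have hsurj' : ∀ y : ZMod n, y ≠ 0 → ∃ x, a x = y := by
    intro y hy
    have : y ∈ Set.range a := by rw [rng]; exact hy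
    exact this
  -- the stability consequence
  have hstab : ∀ w : List Bool, (0 : ZMod n) ∈ excl a w →
      excl a w ⊆ (Hk a ℓ : Set (ZMod n)) → (excl a w).ncard ≤ ℓ + 1 →
      dupl a w ⊆ (Hk a ℓ : Set (ZMod n)) := by
    intro w h0 hs hc p hp
    have h1 : p ∈ Dnext a (Hk a ℓ) (ℓ + 1) := ⟨w, hp, h0, hs, hc⟩
    have h2 : p ∈ Hk a (ℓ + 1) := by
      show p ∈ AddSubgroup.closure (Dnext a (Hk a ℓ) (ℓ + 1))
      exact AddSubgroup.subset_closure h1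
    rw [← hℓ] at h2
    exact h2
  -- the excluded set of the single letter `a`
  have hexcl_a : excl a [false] = {(0 : ZMod n)} := by
    ext x
    simp only [excl, Set.mem_setOf_eq, Set.mem_singleton_iff]
    constructor
    · intro hx
      by_contra hx0
      obtain ⟨y, hy⟩ := hsurj' x hx0
      exact hx y (by rw [wact_false_aux, hy])
    · rintro rfl p
      rw [wact_false_aux]
      exact ha_ne p
  -- a 0 ∈ H
  have ha0H : a 0 ∈ Hk a ℓ := by
    have hd : a 0 ∈ dupl a [false] :=
      ⟨0, r, Ne.symm hr0, by rw [wact_false_aux], by rw [wact_false_aux, har]⟩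
    refine hstab [false] ?_ ?_ ?_ hd
    · rw [hexcl_a]; rfl
    · rw [hexcl_a]
      intro x hx
      rw [Set.mem_singleton_iff] at hx
      subst hx
      exact zero_mem _
    · rw [hexcl_a, Set.ncard_singleton]; omega
  -- the key induction: {t | a t ∈ H} is closed under translation by Hk a k, k ≤ ℓ
  have hB : ∀ k, k ≤ ℓ → ∀ h ∈ Hk a k, ∀ t, a t ∈ Hk a ℓ → a (t + h) ∈ Hk a ℓ := by
    intro k
    induction k with
    | zero =>
        intro _ h hh t ht
        have : h = 0 := by
          have : h ∈ (⊥ : AddSubgroup (ZMod n)) := hh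
          simpa [AddSubgroup.mem_bot] using this
        subst this
        simpa using ht
    | succ k ih =>
        intro hk h hh t ht
        have hh' : h ∈ AddSubgroup.closure (Dnext a (Hk a k) (k + 1)) := hh
        have main : ∀ t, a t ∈ Hk a ℓ → a (t + h) ∈ Hk a ℓ := by
          refine AddSubgroup.closure_induction
            (p := fun x _ => ∀ t, a t ∈ Hk a ℓ → a (t + x) ∈ Hk a ℓ)
            ?_ ?_ ?_ ?_ hh'
          · -- generators
            rintro p ⟨w, hpd, h0w, hsw, hcw⟩ t ht
            set w' := w ++ (List.replicate t.val true ++ [false]) with hw'def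
            have hwact' : ∀ q, wact a w' q = a (wact a w q + t) := fun q =>
              wact_shift_aux w t q
            -- 0 is excluded for w'
            have h0' : (0 : ZMod n) ∈ excl a w' := by
              intro q
              rw [hwact']
              exact ha_ne _
            -- excl of w' is inside {0} ∪ image
            have hsubimg : excl a w' ⊆ {(0 : ZMod n)} ∪ (fun y => a (y + t)) '' excl a w := by
              intro x hx
              by_cases hx0 : x = 0
              · left; exact hx0
              · right
                obtain ⟨y, hy⟩ := hsurj' x hx0
                have hyt : y - t ∈ excl a w := by
                  intro q hq
                  have : wact a w' q = x := by
                    rw [hwact', hq, sub_add_cancel, hy]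
                  exact hx q this
                exact ⟨y - t, hyt, by simp only []; rw [sub_add_cancel, hy]⟩
            -- excl of w' is inside H
            have hsub' : excl a w' ⊆ (Hk a ℓ : Set (ZMod n)) := by
              intro x hx
              rcases hsubimg hx with hx0 | ⟨y, hy, hxe⟩
              · rw [Set.mem_singleton_iff] at hx0
                subst hx0
                exact zero_mem _
              · have hyk : y ∈ Hk a k := hsw hy
                have := ih (by omega) y hyk t ht
                rw [add_comm] at this
                have hxe' : a (y + t) = x := hxe
                rw [← hxe']
                exact this
            -- cardinality bound
            have hcard' : (excl a w').ncard ≤ ℓ + 1 := by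
              have h1 : (excl a w').ncard
                  ≤ ({(0 : ZMod n)} ∪ (fun y => a (y + t)) '' excl a w).ncard :=
                Set.ncard_le_ncard hsubimg (Set.toFinite _)
              have h2 : ({(0 : ZMod n)} ∪ (fun y => a (y + t)) '' excl a w).ncard
                  ≤ ({(0 : ZMod n)} : Set (ZMod n)).ncard
                    + ((fun y => a (y + t)) '' excl a w).ncard :=
                Set.ncard_union_le _ _
              have h3 : ((fun y => a (y + t)) '' excl a w).ncard ≤ (excl a w).ncard :=
                Set.ncard_image_le (Set.toFinite _)
              have h4 : ({(0 : ZMod n)} : Set (ZMod n)).ncard = 1 := Set.ncard_singleton _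
              omega
            -- the duplicate value
            have hdup' : a (p + t) ∈ dupl a w' := by
              obtain ⟨q₁, q₂, hne, he1, he2⟩ := hpd
              exact ⟨q₁, q₂, hne, by rw [hwact', he1], by rw [hwact', he2]⟩
            have := hstab w' h0' hsub' hcard' hdup'
            rwa [add_comm] at this
          · intro t ht
            simpa using ht
          · intro x y _ _ px py t ht
            have h1 := px t ht
            have h2 := py (t + x) h1
            rwa [add_assoc] at h2
          · intro x _ px t ht
            set T : Set (ZMod n) := {u | a u ∈ Hk a ℓ} with hTdef
            have hmap : (fun u => u + x) '' T ⊆ T := by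
              rintro _ ⟨u, hu, rfl⟩
              exact px u hu
            have heq : (fun u => u + x) '' T = T :=
              Set.eq_of_subset_of_ncard_le hmap
                (by rw [Set.ncard_image_of_injective _ (add_left_injective x)])
                (Set.toFinite _)
            have htT : t ∈ T := ht
            rw [← heq] at htT
            obtain ⟨u, hu, huv⟩ := htT
            have hux : u = t + -x := by
              have : u + x = t := huv
              linear_combination this
            rw [hux] at hu
            exact hu
        exact main t ht
  -- a-invariance of H
  have hainv : ∀ h ∈ Hk a ℓ, a h ∈ Hk a ℓ := by
    intro h hh
    have := hB ℓ le_rfl h hh 0 (by simpa using ha0H)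
    simpa using this
  -- the bijection g
  set g : ZMod n → ZMod n := fun x => if x = r then 0 else a x with hgdef
  have h0r : (0 : ZMod n) ≠ r := Ne.symm hr0
  have hgsurj : Function.Surjective g := by
    intro y
    by_cases hy : y = 0
    · exact ⟨r, by simp [hgdef, hy]⟩
    · obtain ⟨x, hx⟩ := hsurj' y hy
      by_cases hxr : x = r
      · refine ⟨0, ?_⟩
        simp only [hgdef, if_neg h0r]
        rw [← har, ← hxr, hx]
      · exact ⟨x, by simp [hgdef, hxr, hx]⟩
  have hginj : Function.Injective g := Finite.injective_iff_surjective.mpr hgsurj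
  have hgH : g '' (Hk a ℓ : Set (ZMod n)) ⊆ (Hk a ℓ : Set (ZMod n)) := by
    rintro _ ⟨x, hx, rfl⟩
    by_cases hxr : x = r
    · simp only [hgdef, if_pos hxr]
      exact zero_mem _
    · simp only [hgdef, if_neg hxr]
      exact hainv x hx
  have hgHeq : g '' (Hk a ℓ : Set (ZMod n)) = (Hk a ℓ : Set (ZMod n)) :=
    Set.eq_of_subset_of_ncard_le hgH
      (by rw [Set.ncard_image_of_injective _ hginj]) (Set.toFinite _)
  have hrH : r ∈ Hk a ℓ := by
    have h0 : (0 : ZMod n) ∈ g '' (Hk a ℓ : Set (ZMod n)) := by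
      rw [hgHeq]
      exact zero_mem _
    obtain ⟨x, hx, hgx⟩ := h0
    by_cases hxr : x = r
    · rwa [hxr] at hx
    · exfalso
      apply ha_ne x
      simpa [hgdef, hxr] using hgx
  have hpre : ∀ x, a x ∈ Hk a ℓ → x ∈ Hk a ℓ := by
    intro x hx
    by_cases hxr : x = r
    · rw [hxr]; exact hrH
    · have hgx : g x ∈ g '' (Hk a ℓ : Set (ZMod n)) := by
        rw [hgHeq]
        simpa [hgdef, hxr] using hx
      obtain ⟨x', hx', he⟩ := hgx
      have : x' = x := hginj he
      rwa [← this]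
  -- the injectivity structure of a
  have hinj2 : ∀ u v, a u = a v → u = v ∨ (u = 0 ∧ v = r) ∨ (u = r ∧ v = 0) := by
    intro u v huv
    by_cases hur : u = r <;> by_cases hvr : v = r
    · left; rw [hur, hvr]
    · right; right
      refine ⟨hur, ?_⟩
      have : g v = g 0 := by
        simp only [hgdef, if_neg hvr, if_neg h0r]
        rw [← huv, hur, har]
      exact hginj this
    · right; left
      refine ⟨?_, hvr⟩
      have : g u = g 0 := by
        simp only [hgdef, if_neg hur, if_neg h0r]
        rw [huv, hvr, har]
      exact hginj this
    · left
      apply hginj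
      simp only [hgdef, if_neg hur, if_neg hvr]
      exact huv
  -- the excluded set of a word is never a coset of H
  have hcoset : ∀ w : List Bool, ∀ d : ZMod n,
      excl a w ≠ {x : ZMod n | x - d ∈ Hk a ℓ} := by
    intro w
    induction w using List.reverseRecOn with
    | nil =>
        intro d he
        have hd : d ∈ excl a ([] : List Bool) := by
          rw [he]
          show d - d ∈ Hk a ℓ
          simpa using zero_mem (Hk a ℓ)
        exact hd d rfl
    | append_singleton w c ih =>
        intro d he
        cases c with
        | true =>
            apply ih (d - 1)
            have hwt : ∀ p, wact a (w ++ [true]) p = wact a w p + 1 := fun p => by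
              rw [wact_append_aux, wact_true_aux]
            ext x
            have hx : x ∈ excl a w ↔ (x + 1) ∈ excl a (w ++ [true]) := by
              simp only [excl, Set.mem_setOf_eq]
              constructor
              · intro h p hp
                rw [hwt] at hp
                exact h p (add_right_cancel hp)
              · intro h p hp
                exact h p (by rw [hwt, hp])
            rw [hx, he]
            simp only [Set.mem_setOf_eq]
            have : x + 1 - d = x - (d - 1) := by ring
            rw [this]
        | false =>
            have hwf : ∀ p, wact a (w ++ [false]) p = a (wact a w p) := fun p => by
              rw [wact_append_aux, wact_false_aux]
            have h0 : (0 : ZMod n) ∈ excl a (w ++ [false]) := by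
              intro p
              rw [hwf]
              exact ha_ne _
            have hdH : d ∈ Hk a ℓ := by
              have h1 : (0 : ZMod n) - d ∈ Hk a ℓ := by
                have := h0
                rw [he] at this
                exact this
              have h2 : -d ∈ Hk a ℓ := by simpa using h1
              simpa using neg_mem h2
            have hset : {x : ZMod n | x - d ∈ Hk a ℓ} = (Hk a ℓ : Set (ZMod n)) := by
              ext x
              simp only [Set.mem_setOf_eq, SetLike.mem_coe]
              constructor
              · intro h
                have := add_mem h hdH
                simpa using this
              · intro h
                exact sub_mem h hdH
            rw [hset] at he
            apply ih 0
            have hexw : excl a w = (Hk a ℓ : Set (ZMod n)) := by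
              apply Set.Subset.antisymm
              · intro x hx
                by_contra hxH
                have haxH : a x ∉ Hk a ℓ := fun hc => hxH (hpre x hc)
                have hnot : a x ∉ excl a (w ++ [false]) := by
                  rw [he]
                  exact haxH
                have hex : ∃ p, wact a (w ++ [false]) p = a x := by
                  by_contra hc
                  push_neg at hc
                  exact hnot hc
                obtain ⟨p, hp⟩ := hex
                rw [hwf] at hp
                rcases hinj2 _ _ hp with h1 | ⟨h1, h2⟩ | ⟨h1, h2⟩
                · exact hx p h1
                · exact hxH (by rw [h2]; exact hrH)
                · exact hxH (by rw [h2]; exact zero_mem _)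
              · intro x hxH
                intro p hp
                have hmem : wact a (w ++ [false]) p = a x := by rw [hwf, hp]
                have hnot : a x ∉ excl a (w ++ [false]) := fun hc => hc p hmem
                rw [he] at hnot
                exact hnot (hainv x hxH)
            rw [hexw]
            ext x
            simp [sub_zero]
  -- conclusion
  intro hCR
  obtain ⟨z, hz⟩ : ∃ z, z ∉ Hk a ℓ := by
    by_contra hc
    push_neg at hc
    exact hproper ((AddSubgroup.eq_top_iff' _).mpr hc)
  obtain ⟨w, hw⟩ := hCR ((Hk a ℓ : Set (ZMod n))ᶜ) ⟨z, hz⟩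
  apply hcoset w 0
  have hexcl_range : excl a w = (Set.range (wact a w))ᶜ := by
    ext x
    simp only [excl, Set.mem_setOf_eq, Set.mem_compl_iff, Set.mem_range, not_exists]
  rw [hexcl_range, hw, compl_compl]
  ext x
  simp [sub_zero]
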